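/- If the tail F̄ is O-regularly varying with exponents in (1,∞) (i.e., there exist β > 1 and C₁, x₁ > 0 such that F̄(t)/F̄(a) ≥ C₁(t/a)^{−β} for all t > a > x₁), then there exist constants C₀, x₀ > 0 such that for all b > a > x₀, the time-per-completion function η(a,b) = (∫ₐᵇ F̄(t) dt)/(F̄(a) − F̄(b)) satisfies η(a,b) ≥ C₀ · a · (1 − a/b). -/

import Mathlib

open MeasureTheory intervalIntegral

/-- If the tail `F̄` satisfies the O-regular variation lower bound
`F̄(t)/F̄(a) ≥ C₁(t/a)^{−β}` for all `t > a > x₁` with `β > 1`, then there exist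
`C₀, x₀ > 0` such that the time-per-completion function
`η(a,b) = (∫ₐᵇ F̄)/(F̄(a) − F̄(b))` satisfies `η(a,b) ≥ C₀·a·(1 − a/b)`
for all `b > a > x₀`. -/
theorem eta_lower_bound (Fbar : ℝ → ℝ) (hcont : Continuous Fbar)
    (hpos : ∀ x, 0 < Fbar x) (hanti : StrictAnti Fbar)
    (β C₁ x₁ : ℝ) (hβ : 1 < β) (hC₁ : 0 < C₁) (hx₁ : 0 < x₁)
    (hlow : ∀ a t, x₁ < a → a < t → C₁ * (t / a) ^ (-β) ≤ Fbar t / Fbar a) :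
    ∃ C₀ x₀ : ℝ, 0 < C₀ ∧ 0 < x₀ ∧ ∀ a b, x₀ < a → a < b →
      C₀ * a * (1 - a / b) ≤ (∫ t in a..b, Fbar t) / (Fbar a - Fbar b) := by
  set B : ℝ := max β 2 with hBdef
  set c : ℝ := min C₁ 1 with hcdef
  have hc0 : 0 < c := lt_min hC₁ one_pos
  have hc1 : c ≤ 1 := min_le_right _ _
  have hB2 : (2:ℝ) ≤ B := le_max_right _ _
  have hBβ : β ≤ B := le_max_left _ _
  have hB1 : (1:ℝ) < B := by linarith
  refine ⟨c / (B - 1), x₁, div_pos hc0 (by linarith), hx₁, fun a b ha hab => ?_⟩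
  have ha0 : 0 < a := hx₁.trans ha
  have hb0 : 0 < b := ha0.trans hab
  have hFa : 0 < Fbar a := hpos a
  have hFab : Fbar b < Fbar a := hanti hab
  -- pointwise lower bound on [a,b]
  have hpt : ∀ t ∈ Set.Icc a b, c * Fbar a * (t / a) ^ (-B) ≤ Fbar t := by
    intro t ht
    rcases eq_or_lt_of_le ht.1 with rfl | hat
    · rw [div_self ha0.ne', Real.one_rpow]
      nlinarith
    · have h1 : (1:ℝ) ≤ t / a := (one_le_div ha0).2 hat.le
      have h2 : (t/a) ^ (-B) ≤ (t/a) ^ (-β) :=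
        Real.rpow_le_rpow_of_exponent_le h1 (by linarith)
      have h3 : C₁ * (t/a) ^ (-β) ≤ Fbar t / Fbar a := hlow a t ha hat
      have h4 : c * (t/a) ^ (-B) ≤ C₁ * (t/a) ^ (-β) := by
        have := Real.rpow_nonneg (by positivity : (0:ℝ) ≤ t/a) (-B)
        nlinarith [min_le_left C₁ 1]
      calc c * Fbar a * (t/a) ^ (-B) = (c * (t/a) ^ (-B)) * Fbar a := by ring
        _ ≤ (Fbar t / Fbar a) * Fbar a := by
            exact mul_le_mul_of_nonneg_right (h4.trans h3) hFa.le
        _ = Fbar t := by field_simp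
  -- integrability
  have hgcont : ContinuousOn (fun t => c * Fbar a * (t / a) ^ (-B)) (Set.uIcc a b) := by
    apply ContinuousOn.mul continuousOn_const
    apply ContinuousOn.rpow_const (continuousOn_id.div_const a)
    intro t ht
    left
    rw [Set.uIcc_of_le hab.le] at ht
    have : 0 < t := lt_of_lt_of_le ha0 ht.1
    positivity
  have hgint : IntervalIntegrable (fun t => c * Fbar a * (t / a) ^ (-B)) volume a b :=
    hgcont.intervalIntegrable
  have hFint : IntervalIntegrable Fbar volume a b := hcont.intervalIntegrable _ _
  have hmono : (∫ t in a..b, c * Fbar a * (t / a) ^ (-B)) ≤ ∫ t in a..b, Fbar t :=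
    integral_mono_on hab.le hgint hFint hpt
  -- compute the g integral
  have hcongr : ∀ t ∈ Set.uIcc a b,
      c * Fbar a * (t / a) ^ (-B) = (c * Fbar a * a ^ B) * t ^ (-B) := by
    intro t ht
    rw [Set.uIcc_of_le hab.le] at ht
    have ht0 : 0 < t := lt_of_lt_of_le ha0 ht.1
    rw [Real.div_rpow ht0.le ha0.le, Real.rpow_neg ha0.le, div_eq_mul_inv, inv_inv]
    ring
  have hval : (∫ t in a..b, c * Fbar a * (t / a) ^ (-B))
      = (c * Fbar a * a ^ B) * ((b ^ (-B + 1) - a ^ (-B + 1)) / (-B + 1)) := by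
    rw [integral_congr hcongr, intervalIntegral.integral_const_mul, integral_rpow]
    right
    constructor
    · intro h; rw [neg_eq_iff_eq_neg] at h; linarith
    · rw [Set.uIcc_of_le hab.le]
      intro h; exact absurd h.1 (by linarith)
  -- algebraic identities
  have key1 : a ^ B * a ^ (-B + 1) = a := by
    rw [← Real.rpow_add ha0]; norm_num
  have key2 : a ^ B * b ^ (-B + 1) = a * (a / b) ^ (B - 1) := by
    rw [Real.div_rpow ha0.le hb0.le]
    rw [show (-B + 1) = -(B - 1) by ring, Real.rpow_neg hb0.le]
    rw [show B = 1 + (B - 1) by ring, Real.rpow_add ha0, Real.rpow_one]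
    ring
  -- the exponent inequality
  have hexp : (a / b) ^ (B - 1) ≤ a / b := by
    have h1 : a / b ≤ 1 := by
      rw [div_le_one hb0]; exact hab.le
    calc (a/b) ^ (B-1) ≤ (a/b) ^ (1:ℝ) :=
        Real.rpow_le_rpow_of_exponent_ge (by positivity) h1 (by linarith)
      _ = a / b := Real.rpow_one _
  -- combine: lower bound on integral
  have hineq : Fbar a * ((c / (B - 1)) * a * (1 - a / b)) ≤ ∫ t in a..b, Fbar t := by
    refine le_trans ?_ hmono
    rw [hval]
    have hB1' : (0:ℝ) < B - 1 := by linarith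
    have hd : ((b ^ (-B+1) - a ^ (-B+1)) / (-B + 1)) = (a ^ (-B+1) - b ^ (-B+1)) / (B - 1) := by
      rw [div_eq_div_iff (by linarith) (by linarith)]; ring
    have hrw : (c * Fbar a * a ^ B) * ((b ^ (-B + 1) - a ^ (-B + 1)) / (-B + 1))
        = (c * Fbar a / (B - 1)) * (a ^ B * a ^ (-B+1) - a ^ B * b ^ (-B+1)) := by
      rw [hd]; ring
    rw [hrw, key1, key2]
    have h5 : 1 - (a/b) ^ (B-1) ≥ 1 - a/b := by linarith
    have h6 := mul_le_mul_of_nonneg_left h5 (by positivity : (0:ℝ) ≤ c * Fbar a / (B-1) * a)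
    have e1 : Fbar a * ((c / (B - 1)) * a * (1 - a / b))
        = c * Fbar a / (B-1) * a * (1 - a/b) := by ring
    have e2 : c * Fbar a / (B - 1) * (a - a * (a / b) ^ (B - 1))
        = c * Fbar a / (B-1) * a * (1 - (a/b) ^ (B-1)) := by ring
    rw [e1, e2]
    linarith [h6]
  -- conclude via divisions
  have h7 : (0:ℝ) ≤ 1 - a / b := by
    rw [sub_nonneg, div_le_one hb0]; exact hab.le
  have hInn : 0 ≤ ∫ t in a..b, Fbar t :=
    le_trans (mul_nonneg hFa.le (mul_nonneg (mul_nonneg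
      (div_pos hc0 (by linarith)).le ha0.le) h7)) hineq
  have step1 : (c / (B - 1)) * a * (1 - a / b) ≤ (∫ t in a..b, Fbar t) / Fbar a := by
    rw [le_div_iff₀ hFa]
    linarith [hineq]
  have step2 : (∫ t in a..b, Fbar t) / Fbar a ≤ (∫ t in a..b, Fbar t) / (Fbar a - Fbar b) := by
    apply div_le_div_of_nonneg_left hInn (by linarith)
    have := (hpos b)
    linarith
  exact step1.trans step2
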